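/- For every permutation σ of {1,…,k}, every α ∈ [0,1), every β ∈ [1,2), and all u ≠ v in X, there exist s ∈ {1,…,k} and a level i ∈ {0,…,m−1} such that P_s cuts {u,v} horizontally at level i or P_s cuts {u,v} vertically at level i. -/

import Mathlib

open Set

noncomputable section

variable {X : Type} [MetricSpace X] [Fintype X]

/-- `nbr Q δ` is the `δ`-neighborhood `N(Q,δ) = {x : min_{p ∈ Q} d x p ≤ δ}` of `Q`. -/
def nbr (Q : Set X) (δ : ℝ) : Set X := {x | ∃ p ∈ Q, dist x p ≤ δ}

/-- The horizontal child `A_s = (A ∩ N(P_{σ s}, β·2^{i-2})) \ ⋃_{t<s} A_t` of a cluster `A`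
at scale `i` (note `2 ^ i / 4 = 2^{i-2}`, and `⋃_{t<s} A_t = ⋃_{t<s} (A ∩ N(P_{σ t}, β·2^{i-2}))`). -/
def hchild {k : ℕ} (P : Fin k → Set X) (σ : Equiv.Perm (Fin k)) (β : ℝ)
    (A : Set X) (i : ℕ) (s : Fin k) : Set X :=
  (A ∩ nbr (P (σ s)) (β * (2 ^ i / 4))) \
    ⋃ t, ⋃ (_ : t < s), A ∩ nbr (P (σ t)) (β * (2 ^ i / 4))

/-- The vertical child `A_{s,j}` of a cluster `A` at scale `i`:
the part of the horizontal child `A_s` with `(j-1+α)·2^{i-2} ≤ d r x < (j+α)·2^{i-2}`. -/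
def vchild {k : ℕ} (r : X) (P : Fin k → Set X) (σ : Equiv.Perm (Fin k)) (α β : ℝ)
    (A : Set X) (i : ℕ) (s : Fin k) (j : ℕ) : Set X :=
  {x ∈ hchild P σ β A i s |
    ((j : ℝ) - 1 + α) * (2 ^ i / 4) ≤ dist r x ∧ dist r x < ((j : ℝ) + α) * (2 ^ i / 4)}

/-- Clusters of the alternating partitions together with (the indices of) their trunks,
defined top-down: `partsTAux … n` is the partition `C (m - n)`.  At the top
`C m = {univ}` with trunk `P (σ 0)`; the clusters of `C i` are the nonempty vertical
children `A_{s,j}` (with trunk `P (σ s)`) of clusters `A ∈ C (i+1)`. -/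
def partsTAux {k : ℕ} (hk : 0 < k) (r : X) (P : Fin k → Set X) (σ : Equiv.Perm (Fin k))
    (α β : ℝ) (m : ℕ) : ℕ → Set (Set X × Fin k)
  | 0 => {(Set.univ, σ ⟨0, hk⟩)}
  | n + 1 =>
      {Bl | Bl.1.Nonempty ∧
        ∃ A : Set X, (∃ l, (A, l) ∈ partsTAux hk r P σ α β m n) ∧
          ∃ s : Fin k, ∃ j : ℕ,
            Bl.1 = vchild r P σ α β A (m - (n + 1)) s j ∧ Bl.2 = σ s}

/-- The alternating partition `C i` with trunk indices: `(A, l) ∈ partsT hk r P σ α β m i`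
means that `A` is a cluster of `C i` whose trunk is the path `P l`. -/
def partsT {k : ℕ} (hk : 0 < k) (r : X) (P : Fin k → Set X) (σ : Equiv.Perm (Fin k))
    (α β : ℝ) (m i : ℕ) : Set (Set X × Fin k) :=
  partsTAux hk r P σ α β m (m - i)

/-- The alternating partition `C i`. -/
def parts {k : ℕ} (hk : 0 < k) (r : X) (P : Fin k → Set X) (σ : Equiv.Perm (Fin k))
    (α β : ℝ) (m i : ℕ) : Set (Set X) :=
  {A | ∃ l, (A, l) ∈ partsT hk r P σ α β m i}

/-- `TrunkOf … i x l`: the path `P l` is the trunk of the cluster `C i (x)` of `C i`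
containing `x`. -/
def TrunkOf {k : ℕ} (hk : 0 < k) (r : X) (P : Fin k → Set X) (σ : Equiv.Perm (Fin k))
    (α β : ℝ) (m i : ℕ) (x : X) (l : Fin k) : Prop :=
  ∃ A : Set X, (A, l) ∈ partsT hk r P σ α β m i ∧ x ∈ A

/-- `u` and `v` lie in the same cluster of `C i`. -/
def SameCluster {k : ℕ} (hk : 0 < k) (r : X) (P : Fin k → Set X) (σ : Equiv.Perm (Fin k))
    (α β : ℝ) (m i : ℕ) (u v : X) : Prop :=
  ∃ A ∈ parts hk r P σ α β m i, u ∈ A ∧ v ∈ A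

/-- `P s` settles `{u,v}` at level `i`: `u` and `v` are in the same cluster of `C (i+1)`,
and `P s` is the first path in the order `σ 0, σ 1, …` that is the trunk of at least one
of `C i (u)`, `C i (v)`. -/
def Settles {k : ℕ} (hk : 0 < k) (r : X) (P : Fin k → Set X) (σ : Equiv.Perm (Fin k))
    (α β : ℝ) (m : ℕ) (s : Fin k) (i : ℕ) (u v : X) : Prop :=
  SameCluster hk r P σ α β m (i + 1) u v ∧
    ∃ s' : Fin k, σ s' = s ∧
      (TrunkOf hk r P σ α β m i u (σ s') ∨ TrunkOf hk r P σ α β m i v (σ s')) ∧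
      ∀ t' : Fin k, t' < s' →
        ¬(TrunkOf hk r P σ α β m i u (σ t') ∨ TrunkOf hk r P σ α β m i v (σ t'))

/-- `P s` cuts `{u,v}` horizontally at level `i`: it settles `{u,v}` at level `i` and is
the trunk of exactly one of `C i (u)`, `C i (v)`. -/
def CutsH {k : ℕ} (hk : 0 < k) (r : X) (P : Fin k → Set X) (σ : Equiv.Perm (Fin k))
    (α β : ℝ) (m : ℕ) (s : Fin k) (i : ℕ) (u v : X) : Prop :=
  Settles hk r P σ α β m s i u v ∧
    Xor' (TrunkOf hk r P σ α β m i u s) (TrunkOf hk r P σ α β m i v s)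

/-- `P s` cuts `{u,v}` vertically at level `i`: `u` and `v` lie in the same cluster `A`
of `C (i+1)` and in the same horizontal child of `A`, whose trunk is `P s`, and
`C i (u) ≠ C i (v)`. -/
def CutsV {k : ℕ} (hk : 0 < k) (r : X) (P : Fin k → Set X) (σ : Equiv.Perm (Fin k))
    (α β : ℝ) (m : ℕ) (s : Fin k) (i : ℕ) (u v : X) : Prop :=
  (∃ A ∈ parts hk r P σ α β m (i + 1), u ∈ A ∧ v ∈ A ∧
      ∃ s' : Fin k, σ s' = s ∧ u ∈ hchild P σ β A i s' ∧ v ∈ hchild P σ β A i s') ∧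
    ¬SameCluster hk r P σ α β m i u v
section Aux
set_option linter.unusedSectionVars false

variable {k : ℕ} (hk : 0 < k) (r : X) (P : Fin k → Set X) (σ : Equiv.Perm (Fin k)) (α β : ℝ)

lemma hchild_disj {A : Set X} {i : ℕ} {s s' : Fin k} (hss : s ≠ s') {x : X}
    (h1 : x ∈ hchild P σ β A i s) (h2 : x ∈ hchild P σ β A i s') : False := by
  rcases lt_or_gt_of_ne hss with h | h
  · exact h2.2 (Set.mem_iUnion.2 ⟨s, Set.mem_iUnion.2 ⟨h, h1.1⟩⟩)
  · exact h1.2 (Set.mem_iUnion.2 ⟨s', Set.mem_iUnion.2 ⟨h, h2.1⟩⟩)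

lemma vchild_disj {A : Set X} {i : ℕ} {s s' : Fin k} {j j' : ℕ}
    (hne : ¬(s = s' ∧ j = j')) {x : X}
    (h1 : x ∈ vchild r P σ α β A i s j) (h2 : x ∈ vchild r P σ α β A i s' j') : False := by
  rcases eq_or_ne s s' with rfl | hss
  · have hjj : j ≠ j' := fun h => hne ⟨rfl, h⟩
    have hc : (0:ℝ) < 2 ^ i / 4 := by positivity
    obtain ⟨-, h11, h12⟩ := h1
    obtain ⟨-, h21, h22⟩ := h2
    rcases lt_or_gt_of_ne hjj with h | h
    · have hle : ((j:ℝ) + α) ≤ ((j':ℝ) - 1 + α) := by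
        have : (j:ℝ) + 1 ≤ (j':ℝ) := by exact_mod_cast h
        linarith
      nlinarith [mul_le_mul_of_nonneg_right hle hc.le]
    · have hle : ((j':ℝ) + α) ≤ ((j:ℝ) - 1 + α) := by
        have : (j':ℝ) + 1 ≤ (j:ℝ) := by exact_mod_cast h
        linarith
      nlinarith [mul_le_mul_of_nonneg_right hle hc.le]
  · exact hchild_disj P σ β hss h1.1 h2.1

lemma partsTAux_disj (m n : ℕ) {B B' : Set X} {l l' : Fin k}
    (hB : (B, l) ∈ partsTAux hk r P σ α β m n) (hB' : (B', l') ∈ partsTAux hk r P σ α β m n)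
    (hne : B ≠ B') {x : X} (hxB : x ∈ B) (hxB' : x ∈ B') : False := by
  induction n generalizing B B' l l' with
  | zero =>
      simp only [partsTAux, Set.mem_singleton_iff, Prod.mk.injEq] at hB hB'
      exact hne (hB.1.trans hB'.1.symm)
  | succ n ih =>
      obtain ⟨-, A, ⟨lA, hA⟩, s, j, hBeq, -⟩ := hB
      obtain ⟨-, A', ⟨lA', hA'⟩, s', j', hBeq', -⟩ := hB'
      simp only at hBeq hBeq'
      rcases eq_or_ne A A' with rfl | hAA
      · by_cases hsj : s = s' ∧ j = j'
        · exact hne (by rw [hBeq, hBeq', hsj.1, hsj.2])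
        · exact vchild_disj r P σ α β hsj (hBeq ▸ hxB) (hBeq' ▸ hxB')
      · have hxA : x ∈ A := (hBeq ▸ hxB).1.1.1
        have hxA' : x ∈ A' := (hBeq' ▸ hxB').1.1.1
        exact ih hA hA' hAA hxA hxA'

lemma partsT_eq_of_mem {m i : ℕ} {B B' : Set X} {l l' : Fin k}
    (hB : (B, l) ∈ partsT hk r P σ α β m i) (hB' : (B', l') ∈ partsT hk r P σ α β m i)
    {x : X} (hx : x ∈ B) (hx' : x ∈ B') : B = B' := by
  by_contra h
  exact partsTAux_disj hk r P σ α β m (m - i) hB hB' h hx hx'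

lemma partsT_succ_mem {m i : ℕ} (him : i < m) {A : Set X} {l : Fin k}
    (hA : (A, l) ∈ partsT hk r P σ α β m (i + 1)) {s : Fin k} {j : ℕ} {x : X}
    (hx : x ∈ vchild r P σ α β A i s j) :
    (vchild r P σ α β A i s j, σ s) ∈ partsT hk r P σ α β m i := by
  have h2 : m - ((m - (i + 1)) + 1) = i := by omega
  unfold partsT at hA ⊢
  rw [show m - i = (m - (i + 1)) + 1 by omega]
  exact ⟨⟨x, hx⟩, A, ⟨l, hA⟩, s, j, by rw [h2], rfl⟩

lemma partsT_mem_elim {m i : ℕ} (him : i < m) {B : Set X} {l : Fin k}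
    (hB : (B, l) ∈ partsT hk r P σ α β m i) :
    ∃ A : Set X, (∃ l', (A, l') ∈ partsT hk r P σ α β m (i + 1)) ∧
      ∃ s j, B = vchild r P σ α β A i s j ∧ l = σ s := by
  unfold partsT at hB ⊢
  rw [show m - i = (m - (i + 1)) + 1 by omega] at hB
  obtain ⟨-, A, hpar, s, j, hBeq, hl⟩ := hB
  simp only at hBeq hl
  exact ⟨A, hpar, s, j, by rwa [show m - ((m - (i + 1)) + 1) = i by omega] at hBeq, hl⟩

lemma exists_vchild (hα : α ∈ Set.Ico (0 : ℝ) 1) (hβ : β ∈ Set.Ico (1 : ℝ) 2)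
    (hcov : (⋃ s, P s) = Set.univ) {A : Set X} {x : X} (hx : x ∈ A) (i : ℕ) :
    ∃ s j, x ∈ vchild r P σ α β A i s j := by
  classical
  have hδ : (0 : ℝ) ≤ β * (2 ^ i / 4) := by
    have : (0:ℝ) < 2 ^ i / 4 := by positivity
    nlinarith [hβ.1]
  have hex : ∃ n : ℕ, ∃ h : n < k, x ∈ nbr (P (σ ⟨n, h⟩)) (β * (2 ^ i / 4)) := by
    have hxu : x ∈ ⋃ s, P s := hcov ▸ Set.mem_univ x
    obtain ⟨t, ht⟩ := Set.mem_iUnion.1 hxu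
    refine ⟨(σ.symm t).1, (σ.symm t).2, ⟨x, ?_, by simpa using hδ⟩⟩
    show x ∈ P (σ (σ.symm t))
    rwa [Equiv.apply_symm_apply]
  obtain ⟨hn0k, hnbr⟩ := Nat.find_spec hex
  set s : Fin k := ⟨Nat.find hex, hn0k⟩ with hs
  have hsx : x ∈ hchild P σ β A i s := by
    refine ⟨⟨hx, hnbr⟩, ?_⟩
    intro hmem
    simp only [Set.mem_iUnion] at hmem
    obtain ⟨t, hts, -, htn⟩ := hmem
    exact Nat.find_min hex (show t.1 < Nat.find hex from hts) ⟨t.2, htn⟩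
  set c : ℝ := 2 ^ i / 4 with hc
  have hcpos : (0:ℝ) < c := by positivity
  have hd : (0:ℝ) ≤ dist r x := dist_nonneg
  by_cases hsmall : dist r x < α * c
  · refine ⟨s, 0, hsx, ?_, ?_⟩
    · rw [← hc]
      push_cast
      nlinarith [mul_nonneg (by linarith [hα.2] : (0:ℝ) ≤ 1 - α) hcpos.le]
    · rw [← hc]
      push_cast
      linarith
  · push_neg at hsmall
    set y : ℝ := dist r x / c - α with hy
    have hy0 : 0 ≤ y := by
      rw [hy, sub_nonneg, le_div_iff₀ hcpos]
      linarith
    have hfl : (0:ℤ) ≤ ⌊y⌋ := Int.floor_nonneg.2 hy0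
    have hcast : ((⌊y⌋.toNat : ℕ) : ℝ) = (⌊y⌋ : ℝ) := by
      exact_mod_cast congrArg (fun z : ℤ => (z : ℝ)) (Int.toNat_of_nonneg hfl)
    have hfle : (⌊y⌋ : ℝ) ≤ y := Int.floor_le y
    have hflt : y < (⌊y⌋ : ℝ) + 1 := Int.lt_floor_add_one y
    have hdc : dist r x = (y + α) * c := by
      rw [hy]
      field_simp
      ring
    refine ⟨s, ⌊y⌋.toNat + 1, hsx, ?_, ?_⟩
    · rw [← hc]
      push_cast [hcast]
      rw [hdc]
      nlinarith [mul_le_mul_of_nonneg_right hfle hcpos.le]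
    · rw [← hc]
      push_cast [hcast]
      rw [hdc]
      nlinarith [mul_le_mul_of_nonneg_right hflt.le hcpos.le]

end Aux


/-- For every permutation `σ`, every `α ∈ [0,1)`, `β ∈ [1,2)`, and all
`u ≠ v` in `X`, some path `P s` cuts `{u,v}` horizontally or vertically at some level
`i ∈ {0,…,m-1}`. -/
theorem statement8 {k : ℕ} (hk : 0 < k) (r : X) (P : Fin k → Set X) (m : ℕ)
    (hr : ∀ s, r ∈ P s) (hcov : (⋃ s, P s) = Set.univ)
    (hpath : ∀ s, ∀ x ∈ P s, ∀ y ∈ P s, dist x y = |dist r x - dist r y|)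
    (hmin : ∀ x y : X, x ≠ y → 1 ≤ dist x y)
    (hm : (m : ℤ) = 2 + ⌈Real.logb 2 (Metric.diam (Set.univ : Set X))⌉)
    (σ : Equiv.Perm (Fin k)) (α β : ℝ)
    (hα : α ∈ Set.Ico (0 : ℝ) 1) (hβ : β ∈ Set.Ico (1 : ℝ) 2)
    (u v : X) (huv : u ≠ v) :
    ∃ (s : Fin k) (i : ℕ), i < m ∧
      (CutsH hk r P σ α β m s i u v ∨ CutsV hk r P σ α β m s i u v) := by
  classical
  -- Step A : `2 ≤ m`
  have hΔ : (1:ℝ) ≤ Metric.diam (Set.univ : Set X) := by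
    have hb : Bornology.IsBounded (Set.univ : Set X) := Set.finite_univ.isBounded
    linarith [hmin u v huv, Metric.dist_le_diam_of_mem hb (Set.mem_univ u) (Set.mem_univ v)]
  have hm2 : 2 ≤ m := by
    have h0 : (0:ℤ) ≤ ⌈Real.logb 2 (Metric.diam (Set.univ : Set X))⌉ :=
      Int.ceil_nonneg (Real.logb_nonneg (by norm_num) hΔ)
    have : (2:ℤ) ≤ (m:ℤ) := by rw [hm]; linarith
    exact_mod_cast this
  -- Step B : `u` and `v` are not in the same cluster of `C 0`
  have hSC0 : ¬ SameCluster hk r P σ α β m 0 u v := by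
    rintro ⟨B, ⟨l, hB⟩, hu, hv⟩
    obtain ⟨A, ⟨l', hA⟩, s, j, hBeq, -⟩ :=
      partsT_mem_elim hk r P σ α β (show 0 < m by omega) hB
    rw [hBeq] at hu hv
    obtain ⟨⟨⟨-, pu, hpuP, hpud⟩, -⟩, hu1, hu2⟩ := hu
    obtain ⟨⟨⟨-, pv, hpvP, hpvd⟩, -⟩, hv1, hv2⟩ := hv
    have hlt : β * ((2:ℝ) ^ 0 / 4) < 1 := by
      norm_num
      linarith [hβ.2]
    have hup : u = pu := by
      by_contra h
      linarith [hmin u pu h]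
    have hvp : v = pv := by
      by_contra h
      linarith [hmin v pv h]
    have hd : dist u v = |dist r u - dist r v| :=
      hpath (σ s) u (hup ▸ hpuP) v (hvp ▸ hpvP)
    have habs : |dist r u - dist r v| < 1 := by
      rw [abs_sub_lt_iff]
      norm_num at hu1 hu2 hv1 hv2
      constructor <;> nlinarith
    linarith [hmin u v huv, hd ▸ habs]
  -- Step C : the separation level `i`
  have hQm : SameCluster hk r P σ α β m m u v := by
    refine ⟨Set.univ, ⟨σ ⟨0, hk⟩, ?_⟩, Set.mem_univ u, Set.mem_univ v⟩
    unfold partsT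
    rw [Nat.sub_self]
    rfl
  have hexQ : ∃ j, SameCluster hk r P σ α β m j u v := ⟨m, hQm⟩
  have hj0pos : 1 ≤ Nat.find hexQ := by
    rcases Nat.eq_zero_or_pos (Nat.find hexQ) with h | h
    · exact absurd (h ▸ Nat.find_spec hexQ) hSC0
    · exact h
  have hj0le : Nat.find hexQ ≤ m := Nat.find_le hQm
  set i := Nat.find hexQ - 1 with hidef
  have hi1 : i + 1 = Nat.find hexQ := by omega
  have him : i < m := by omega
  have hSCi1 : SameCluster hk r P σ α β m (i + 1) u v := by
    rw [hi1]; exact Nat.find_spec hexQ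
  have hSCi : ¬ SameCluster hk r P σ α β m i u v := Nat.find_min hexQ (by omega)
  -- Step D : settling path
  obtain ⟨A, ⟨l, hA⟩, huA, hvA⟩ := id hSCi1
  obtain ⟨su, ju, hvu⟩ := exists_vchild r P σ α β hα hβ hcov huA i
  obtain ⟨sv, jv, hvv⟩ := exists_vchild r P σ α β hα hβ hcov hvA i
  have hTu : TrunkOf hk r P σ α β m i u (σ su) :=
    ⟨_, partsT_succ_mem hk r P σ α β him hA hvu, hvu⟩
  have hTv : TrunkOf hk r P σ α β m i v (σ sv) :=
    ⟨_, partsT_succ_mem hk r P σ α β him hA hvv, hvv⟩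
  have hexT : ∃ n : ℕ, ∃ h : n < k,
      TrunkOf hk r P σ α β m i u (σ ⟨n, h⟩) ∨ TrunkOf hk r P σ α β m i v (σ ⟨n, h⟩) :=
    ⟨su.1, su.2, Or.inl hTu⟩
  obtain ⟨hn0k, hTs'⟩ := Nat.find_spec hexT
  set s' : Fin k := ⟨Nat.find hexT, hn0k⟩ with hs'
  have hminT : ∀ t' : Fin k, t' < s' →
      ¬(TrunkOf hk r P σ α β m i u (σ t') ∨ TrunkOf hk r P σ α β m i v (σ t')) := by
    intro t' ht' hcon
    exact Nat.find_min hexT (show t'.1 < Nat.find hexT from ht') ⟨t'.2, hcon⟩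
  have hSettles : Settles hk r P σ α β m (σ s') i u v := ⟨hSCi1, s', rfl, hTs', hminT⟩
  by_cases hxor : Xor' (TrunkOf hk r P σ α β m i u (σ s')) (TrunkOf hk r P σ α β m i v (σ s'))
  · exact ⟨σ s', i, him, Or.inl ⟨hSettles, hxor⟩⟩
  · have hboth : TrunkOf hk r P σ α β m i u (σ s') ∧ TrunkOf hk r P σ α β m i v (σ s') := by
      unfold Xor' Xor at hxor
      tauto
    obtain ⟨⟨Bu, hBu, huBu⟩, ⟨Bv, hBv, hvBv⟩⟩ := hboth
    obtain ⟨Au, ⟨lu, hAu⟩, tu, ju', hBueq, hlu⟩ := partsT_mem_elim hk r P σ α β him hBu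
    obtain ⟨Av, ⟨lv, hAv⟩, tv, jv', hBveq, hlv⟩ := partsT_mem_elim hk r P σ α β him hBv
    have htu : tu = s' := σ.injective hlu.symm
    have htv : tv = s' := σ.injective hlv.symm
    subst htu htv
    rw [hBueq] at huBu
    rw [hBveq] at hvBv
    have hAuA : Au = A := partsT_eq_of_mem hk r P σ α β hAu hA huBu.1.1.1 huA
    have hAvA : Av = A := partsT_eq_of_mem hk r P σ α β hAv hA hvBv.1.1.1 hvA
    rw [hAuA] at huBu
    rw [hAvA] at hvBv
    exact ⟨σ s', i, him,
      Or.inr ⟨⟨A, ⟨l, hA⟩, huA, hvA, s', rfl, huBu.1, hvBv.1⟩, hSCi⟩⟩
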